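/- Let p be an odd prime and T the Heisenberg group of order p³: T is generated by A, B with relations A^p = B^p = [A,B]^p = [A,[A,B]] = [B,[A,B]] = 1. Let H = ⟨B, [A,B]⟩ ≅ (Z/p)², with dual basis e₁^∨, e₂^∨ where e₁ = B, e₂ = [A,B]. Then Cores_H^T(e₁^∨ ∪ e₁^∨) = 0 and Cores_H^T(e₁^∨ ∪ e₂^∨) = 0 in H³(T, Q/Z). -/

import Mathlib

open scoped BigOperators Classical
open scoped commutatorElement

/-- The group `ℚ/ℤ`. -/
abbrev QZ : Type := AddCircle (1 : ℚ)

/-- The differential on inhomogeneous group cochains with trivial coefficients in `ℚ/ℤ`. -/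
noncomputable def cochainD {G : Type*} [Group G] {n : ℕ} (f : (Fin n → G) → QZ) :
    (Fin (n + 1) → G) → QZ := fun g =>
  f (fun i => g i.succ) +
    (∑ i : Fin n, ((-1 : ℤ) ^ ((i : ℕ) + 1)) •
      f (fun j => if (j : ℕ) < (i : ℕ) then g (Fin.castSucc j)
        else if (j : ℕ) = (i : ℕ) then g (Fin.castSucc j) * g j.succ
        else g j.succ)) +
    ((-1 : ℤ) ^ (n + 1)) • f (fun i => g (Fin.castSucc i))

/-- A cochain is a cocycle if its differential vanishes. -/
noncomputable def IsCocycle {G : Type*} [Group G] {n : ℕ} (f : (Fin n → G) → QZ) : Prop :=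
  cochainD f = 0

/-- A cochain is a coboundary if it is the differential of a cochain of one degree lower
(in degree `0` this means that it vanishes). -/
noncomputable def IsCoboundary {G : Type*} [Group G] : {n : ℕ} → ((Fin n → G) → QZ) → Prop
  | 0, f => f = 0
  | (_ + 1), f => ∃ h, cochainD h = f

/-- Extension by zero of a cochain on a subgroup to a cochain on the ambient group. -/
noncomputable def restrictTo {G : Type*} [Group G] (H : Subgroup G) {n : ℕ}
    (f : (Fin n → H) → QZ) : (Fin n → G) → QZ := fun g =>
  if h : ∀ i, g i ∈ H then f (fun i => ⟨g i, h i⟩) else 0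

/-- The transfer (corestriction) of an inhomogeneous cochain on a subgroup `H` of `G`
along a section `σ` of the space of right cosets of `H` in `G`. -/
noncomputable def transfer {G : Type*} [Group G] (H : Subgroup G)
    (σ : Quotient (QuotientGroup.rightRel H) → G) {n : ℕ}
    (f : (Fin n → H) → QZ) : (Fin n → G) → QZ := fun g =>
  ∑ᶠ x : Quotient (QuotientGroup.rightRel H),
    restrictTo H f (fun i =>
      σ (Quotient.mk (QuotientGroup.rightRel H) (σ x * ((List.ofFn g).take i).prod))
        * g i *
      (σ (Quotient.mk (QuotientGroup.rightRel H)
          (σ x * ((List.ofFn g).take ((i : ℕ) + 1)).prod)))⁻¹)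

/-- `σ` is a section of the right coset space. -/
def IsSection {G : Type*} [Group G] (H : Subgroup G)
    (σ : Quotient (QuotientGroup.rightRel H) → G) : Prop :=
  ∀ x, Quotient.mk (QuotientGroup.rightRel H) (σ x) = x

/-- Additive characters with values in `ℚ/ℤ`. -/
def IsChar {G : Type*} [Group G] (χ : G → QZ) : Prop :=
  ∀ a b, χ (a * b) = χ a + χ b

/-- The explicit 3-cocycle representing the cup product `χ ∪ χ'` of two degree-one classes,
written in terms of rational lifts `a` of `χ` and `b` of `χ'`. -/
noncomputable def cup3 {H : Type*} [Group H] (a b : H → ℚ) : (Fin 3 → H) → QZ := fun g =>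
  (((a (g 0) + a (g 1) - a (g 0 * g 1)) * b (g 2) : ℚ) : QZ)

/-- The Hochschild–Serre filtration on cochains: `f` lies in filtration `p` with respect to a
normal subgroup `K` if it is invariant under translating its last `p` arguments by `K`. -/
def inFilt {G : Type*} [Group G] (K : Subgroup G) (p : ℕ) {n : ℕ}
    (f : (Fin n → G) → QZ) : Prop :=
  ∀ (g κ : Fin n → G), (∀ i, κ i ∈ K) → (∀ i : Fin n, (i : ℕ) < n - p → κ i = 1) →
    f (fun i => g i * κ i) = f g

/-- The Heisenberg group of order `p³`: triples `(a,b,c)` over `ℤ/p` with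
`(a,b,c)·(a',b',c') = (a+a', b+b', c+c'+ab')`.  It is generated by `A = (1,0,0)` and
`B = (0,1,0)`, with `[A,B] = (0,0,1)`, and satisfies the relations
`A^p = B^p = [A,B]^p = [A,[A,B]] = [B,[A,B]] = 1`. -/
def Heis (p : ℕ) : Type := ZMod p × ZMod p × ZMod p

namespace Heis

variable {p : ℕ}

private def hmul (x y : Heis p) : Heis p :=
  (x.1 + y.1, x.2.1 + y.2.1, x.2.2 + y.2.2 + x.1 * y.2.1)

private def hinv (x : Heis p) : Heis p := (-x.1, -x.2.1, -x.2.2 + x.1 * x.2.1)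

instance : Group (Heis p) where
  mul := hmul
  one := ((0 : ZMod p), (0 : ZMod p), (0 : ZMod p))
  inv := hinv
  mul_assoc a b c := by
    show hmul (hmul a b) c = hmul a (hmul b c)
    simp only [hmul]
    exact Prod.ext (by ring) (Prod.ext (by ring) (by ring))
  one_mul a := by
    show hmul (0, 0, 0) a = a
    simp only [hmul]
    exact Prod.ext (by simp) (Prod.ext (by simp) (by simp))
  mul_one a := by
    show hmul a (0, 0, 0) = a
    simp only [hmul]
    exact Prod.ext (by simp) (Prod.ext (by simp) (by simp))
  inv_mul_cancel a := by
    show hmul (hinv a) a = (0, 0, 0)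
    simp only [hmul, hinv]
    exact Prod.ext (by ring) (Prod.ext (by ring) (by ring))

/-- The subgroup `H = ⟨B, [A,B]⟩ = {(0,b,c)} ≅ (ℤ/p)²` of the Heisenberg group. -/
def Hsub (p : ℕ) : Subgroup (Heis p) where
  carrier := {x | x.1 = 0}
  mul_mem' := by
    intro a b (ha : a.1 = 0) (hb : b.1 = 0)
    show a.1 + b.1 = 0
    simp [ha, hb]
  one_mem' := rfl
  inv_mem' := by
    intro a (ha : a.1 = 0)
    show -a.1 = 0
    simp [ha]

end Heis


/-- The generator `A = (1,0,0)` of the Heisenberg group. -/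
def Heis.A (p : ℕ) : Heis p := (1, 0, 0)

/-- The generator `B = (0,1,0)` of the Heisenberg group. -/
def Heis.B (p : ℕ) : Heis p := (0, 1, 0)

/-- The rational lift of the character `e₁^∨ : (0,b,c) ↦ b/p` of `H = ⟨B,[A,B]⟩`. -/
noncomputable def l1 {p : ℕ} (h : Heis.Hsub p) : ℚ := ((h : Heis p).2.1.val : ℚ) / p

/-- The rational lift of the character `e₂^∨ : (0,b,c) ↦ c/p` of `H = ⟨B,[A,B]⟩`. -/
noncomputable def l2 {p : ℕ} (h : Heis.Hsub p) : ℚ := ((h : Heis p).2.2.val : ℚ) / p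

namespace Stmt9Aux

variable {p : ℕ}

theorem hmul_def (x y : Heis p) :
    x * y = (x.1 + y.1, x.2.1 + y.2.1, x.2.2 + y.2.2 + x.1 * y.2.1) := rfl

theorem hone_def : (1 : Heis p) = ((0 : ZMod p), 0, 0) := rfl

theorem hinv_def (x : Heis p) : x⁻¹ = (-x.1, -x.2.1, -x.2.2 + x.1 * x.2.1) := rfl

theorem hmul_mk (a b c a' b' c' : ZMod p) :
    @HMul.hMul (Heis p) (Heis p) (Heis p) _ (a, b, c) (a', b', c')
      = ((a + a', b + b', c + c' + a * b') : Heis p) :=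
  rfl

theorem hinv_mk (a b c : ZMod p) : @Inv.inv (Heis p) _ (a, b, c) = ((-a, -b, -c + a * b) : Heis p) :=
  rfl

theorem mem_Hsub {x : Heis p} : x ∈ Heis.Hsub p ↔ x.1 = 0 := Iff.rfl

theorem A_pow (n : ℕ) : (Heis.A p) ^ n = ((n : ZMod p), 0, 0) := by
  induction n with
  | zero => simp [hone_def]; rfl
  | succ n ih =>
      rw [pow_succ, ih, Heis.A]; erw [hmul_def]
      push_cast
      exact Prod.ext (by ring) (Prod.ext (by ring) (by ring))

theorem B_pow (n : ℕ) : (Heis.B p) ^ n = (0, (n : ZMod p), 0) := by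
  induction n with
  | zero => simp [hone_def]; rfl
  | succ n ih =>
      rw [pow_succ, ih, Heis.B]; erw [hmul_def]
      push_cast
      exact Prod.ext (by ring) (Prod.ext (by ring) (by ring))

/-- The commutator element. -/
def C (p : ℕ) : Heis p := (0, 0, 1)

theorem C_pow (n : ℕ) : (C p) ^ n = (0, 0, (n : ZMod p)) := by
  induction n with
  | zero => simp [hone_def]; rfl
  | succ n ih =>
      rw [pow_succ, ih, C]; erw [hmul_def]
      push_cast
      exact Prod.ext (by ring) (Prod.ext (by ring) (by ring))

theorem comm_AB : ⁅Heis.A p, Heis.B p⁆ = C p := by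
  show Heis.A p * Heis.B p * (Heis.A p)⁻¹ * (Heis.B p)⁻¹ = C p
  rw [Heis.A, Heis.B, C]
  simp only [hmul_mk, hinv_mk]
  exact Prod.ext (by ring) (Prod.ext (by ring) (by ring))

theorem relations :
    Heis.A p ^ p = 1 ∧ Heis.B p ^ p = 1 ∧
      ⁅Heis.A p, Heis.B p⁆ ^ p = 1 ∧
      ⁅Heis.A p, ⁅Heis.A p, Heis.B p⁆⁆ = 1 ∧
      ⁅Heis.B p, ⁅Heis.A p, Heis.B p⁆⁆ = 1 := by
  refine ⟨?_, ?_, ?_, ?_, ?_⟩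
  · rw [A_pow]; simp [hone_def]; rfl
  · rw [B_pow]; simp [hone_def]; rfl
  · rw [comm_AB, C_pow]; simp [hone_def]; rfl
  · rw [comm_AB]
    show Heis.A p * C p * (Heis.A p)⁻¹ * (C p)⁻¹ = 1
    rw [Heis.A, C, hone_def]
    simp only [hmul_mk, hinv_mk]
    exact Prod.ext (by ring) (Prod.ext (by ring) (by ring))
  · rw [comm_AB]
    show Heis.B p * C p * (Heis.B p)⁻¹ * (C p)⁻¹ = 1
    rw [Heis.B, C, hone_def]
    simp only [hmul_mk, hinv_mk]
    exact Prod.ext (by ring) (Prod.ext (by ring) (by ring))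

theorem closure_eq [NeZero p] :
    Heis.Hsub p = Subgroup.closure {Heis.B p, ⁅Heis.A p, Heis.B p⁆} := by
  apply le_antisymm
  · intro x hx
    have hx1 : x.1 = 0 := hx
    have hB : Heis.B p ∈ Subgroup.closure {Heis.B p, ⁅Heis.A p, Heis.B p⁆} :=
      Subgroup.subset_closure (by simp)
    have hC : ⁅Heis.A p, Heis.B p⁆ ∈ Subgroup.closure {Heis.B p, ⁅Heis.A p, Heis.B p⁆} :=
      Subgroup.subset_closure (by simp)
    have hx' : x = Heis.B p ^ (x.2.1.val) * ⁅Heis.A p, Heis.B p⁆ ^ (x.2.2.val) := by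
      rw [comm_AB, B_pow, C_pow]; erw [hmul_def]
      simp only [ZMod.natCast_val, ZMod.cast_id]
      exact Prod.ext (by simp [hx1]) (Prod.ext (by simp) (by simp))
    rw [hx']
    exact mul_mem (pow_mem hB _) (pow_mem hC _)
  · rw [Subgroup.closure_le]
    rintro x (rfl | rfl)
    · exact (mem_Hsub).mpr rfl
    · rw [comm_AB]; exact (mem_Hsub).mpr rfl

end Stmt9Aux
namespace Stmt9Aux
set_option linter.unusedSectionVars false

variable {p : ℕ}

/-- The right coset space. -/
abbrev Qt (p : ℕ) := Quotient (QuotientGroup.rightRel (Heis.Hsub p))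

theorem mk_eq_mk {a b : Heis p} :
    Quotient.mk (QuotientGroup.rightRel (Heis.Hsub p)) a =
      Quotient.mk (QuotientGroup.rightRel (Heis.Hsub p)) b ↔ a.1 = b.1 := by
  constructor
  · intro h
    have h1 : (b * a⁻¹).1 = 0 := QuotientGroup.rightRel_apply.mp (Quotient.exact h)
    rw [hmul_def, hinv_def] at h1
    simp only at h1
    linear_combination -h1
  · intro h
    apply Quotient.sound
    apply QuotientGroup.rightRel_apply.mpr
    show (b * a⁻¹).1 = 0
    rw [hmul_def, hinv_def]
    simp only
    rw [h]; ring

section Sigma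

variable (σ : Qt p → Heis p)

/-- Right action of the group on the coset space, via the section. -/
noncomputable def act (x : Qt p) (g : Heis p) : Qt p :=
  Quotient.mk (QuotientGroup.rightRel (Heis.Hsub p)) (σ x * g)

/-- The cocycle `w(x,g) = σ(x) g σ(x·g)⁻¹ ∈ H`. -/
noncomputable def w (x : Qt p) (g : Heis p) : Heis p :=
  σ x * g * (σ (act σ x g))⁻¹

variable (hσ : IsSection (Heis.Hsub p) σ)
include hσ

theorem fst_σ_mk (y : Heis p) :
    (σ (Quotient.mk (QuotientGroup.rightRel (Heis.Hsub p)) y)).1 = y.1 :=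
  mk_eq_mk.mp (hσ _)

theorem fst_act (x : Qt p) (g : Heis p) :
    (σ (act σ x g)).1 = (σ x).1 + g.1 := by
  rw [act, fst_σ_mk σ hσ, hmul_def]

theorem act_one (x : Qt p) : act σ x 1 = x := by
  rw [act, mul_one]; exact hσ x

theorem act_mul (x : Qt p) (g h : Heis p) :
    act σ x (g * h) = act σ (act σ x g) h := by
  rw [act, act, mk_eq_mk, hmul_def, hmul_def, hmul_def]
  simp only
  rw [fst_act σ hσ]
  ring

theorem w_mem (x : Qt p) (g : Heis p) : w σ x g ∈ Heis.Hsub p := by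
  rw [mem_Hsub, w, hmul_def, hmul_def, hinv_def]
  simp only
  rw [fst_act σ hσ]
  ring

theorem w_cocycle (x : Qt p) (g h : Heis p) :
    w σ x (g * h) = w σ x g * w σ (act σ x g) h := by
  rw [w, w, w, ← act_mul σ hσ]
  group

theorem w_fst (x : Qt p) (g : Heis p) : (w σ x g).1 = 0 := w_mem σ hσ x g

/-- Second coordinate of `w`. -/
theorem w_snd (x : Qt p) (g : Heis p) :
    (w σ x g).2.1 = (σ x).2.1 + g.2.1 - (σ (act σ x g)).2.1 := by
  rw [w, hmul_def, hmul_def, hinv_def]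
  simp only
  ring

/-- Third coordinate of `w`. -/
theorem w_thd (x : Qt p) (g : Heis p) :
    (w σ x g).2.2 = (σ x).2.2 - (σ (act σ x g)).2.2 + g.2.2 + (σ x).1 * g.2.1 := by
  rw [w, hmul_def, hmul_def, hinv_def]
  simp only
  rw [fst_act σ hσ]
  ring

theorem w_snd_add (x : Qt p) (g h : Heis p) :
    (w σ x (g * h)).2.1 = (w σ x g).2.1 + (w σ (act σ x g) h).2.1 := by
  rw [w_cocycle σ hσ, hmul_def]

theorem w_thd_add (x : Qt p) (g h : Heis p) :
    (w σ x (g * h)).2.2 = (w σ x g).2.2 + (w σ (act σ x g) h).2.2 := by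
  rw [w_cocycle σ hσ, hmul_def]
  simp only
  rw [w_fst σ hσ]
  ring

end Sigma

end Stmt9Aux
namespace Stmt9Aux
set_option linter.unusedSectionVars false

variable {p : ℕ}

instance [NeZero p] : Fintype (Heis p) :=
  inferInstanceAs (Fintype (ZMod p × ZMod p × ZMod p))

noncomputable instance [NeZero p] : Fintype (Qt p) := Fintype.ofFinite _

section Sigma

variable [NeZero p] (σ : Qt p → Heis p) (hσ : IsSection (Heis.Hsub p) σ)
include hσ

/-- Right translation as an equivalence of the coset space. -/
noncomputable def actEquiv (g : Heis p) : Qt p ≃ Qt p where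
  toFun x := act σ x g
  invFun x := act σ x g⁻¹
  left_inv x := by
    show act σ (act σ x g) g⁻¹ = x
    rw [← act_mul σ hσ, mul_inv_cancel, act_one σ hσ]
  right_inv x := by
    show act σ (act σ x g⁻¹) g = x
    rw [← act_mul σ hσ, inv_mul_cancel, act_one σ hσ]

theorem alpha_bijective : Function.Bijective (fun x : Qt p => (σ x).1) := by
  constructor
  · intro x y hxy
    have : Quotient.mk (QuotientGroup.rightRel (Heis.Hsub p)) (σ x) =
        Quotient.mk (QuotientGroup.rightRel (Heis.Hsub p)) (σ y) := mk_eq_mk.mpr hxy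
    rwa [hσ x, hσ y] at this
  · intro t
    refine ⟨Quotient.mk (QuotientGroup.rightRel (Heis.Hsub p)) ((t, 0, 0) : Heis p), ?_⟩
    exact fst_σ_mk σ hσ _

theorem sum_alpha : ∑ x : Qt p, (σ x).1 = ∑ t : ZMod p, t :=
  Fintype.sum_bijective _ (alpha_bijective σ hσ) _ _ (fun _ => rfl)

theorem card_Qt : Fintype.card (Qt p) = p := by
  rw [Fintype.card_of_bijective (alpha_bijective σ hσ), ZMod.card]

theorem sum_sigma_reindex (g : Heis p) (f : Qt p → ZMod p) :
    ∑ x : Qt p, f (act σ x g) = ∑ x : Qt p, f x :=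
  Fintype.sum_equiv (actEquiv σ hσ g) _ _ (fun _ => rfl)

end Sigma

theorem sum_zmod_eq_zero [NeZero p] (hp : p.Prime) (hodd : Odd p) :
    ∑ t : ZMod p, t = 0 := by
  haveI : NeZero p := ⟨hp.ne_zero⟩
  haveI := Fact.mk hp
  have h2 : (2 : ZMod p) ≠ 0 := by
    intro h
    have := (ZMod.natCast_eq_zero_iff 2 p).mp (by exact_mod_cast h)
    rw [Nat.prime_dvd_prime_iff_eq hp Nat.prime_two] at this
    rw [this] at hodd
    exact (Nat.not_odd_iff_even.mpr (by norm_num)) hodd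
  have key : (2 : ZMod p) * ∑ t : ZMod p, t = 0 := by
    have hneg : ∑ t : ZMod p, -t = ∑ t : ZMod p, t :=
      Fintype.sum_equiv (Equiv.neg (ZMod p)) _ _ (fun _ => rfl)
    have : ∑ t : ZMod p, t + ∑ t : ZMod p, -t = 0 := by
      rw [← Finset.sum_add_distrib]; simp
    rw [hneg] at this
    linear_combination this
  exact (mul_eq_zero.mp key).resolve_left h2

section Sums

variable [NeZero p] (σ : Qt p → Heis p) (hσ : IsSection (Heis.Hsub p) σ)
  (hp : p.Prime) (hodd : Odd p)
include hσ

theorem sum_w_snd (g : Heis p) : ∑ x : Qt p, (w σ x g).2.1 = 0 := by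
  have := sum_sigma_reindex σ hσ g (fun x => (σ x).2.1)
  calc ∑ x : Qt p, (w σ x g).2.1
      = ∑ x : Qt p, ((σ x).2.1 + g.2.1 - (σ (act σ x g)).2.1) := by
        refine Finset.sum_congr rfl fun x _ => w_snd σ hσ x g
    _ = (∑ x : Qt p, (σ x).2.1) + (Fintype.card (Qt p)) • g.2.1
          - ∑ x : Qt p, (σ (act σ x g)).2.1 := by
        rw [Finset.sum_sub_distrib, Finset.sum_add_distrib, Finset.sum_const,
          Finset.card_univ]
    _ = 0 := by
        rw [this, card_Qt σ hσ, nsmul_eq_mul, ZMod.natCast_self]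
        ring

include hp hodd in
theorem sum_w_thd (g : Heis p) : ∑ x : Qt p, (w σ x g).2.2 = 0 := by
  have h1 := sum_sigma_reindex σ hσ g (fun x => (σ x).2.2)
  calc ∑ x : Qt p, (w σ x g).2.2
      = ∑ x : Qt p, ((σ x).2.2 - (σ (act σ x g)).2.2 + g.2.2 + (σ x).1 * g.2.1) := by
        refine Finset.sum_congr rfl fun x _ => w_thd σ hσ x g
    _ = ((∑ x : Qt p, (σ x).2.2) - ∑ x : Qt p, (σ (act σ x g)).2.2)
          + (Fintype.card (Qt p)) • g.2.2 + (∑ x : Qt p, (σ x).1) * g.2.1 := by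
        rw [Finset.sum_add_distrib, Finset.sum_add_distrib, Finset.sum_sub_distrib,
          Finset.sum_const, Finset.card_univ, Finset.sum_mul]
    _ = 0 := by
        rw [h1, sum_alpha σ hσ, sum_zmod_eq_zero hp hodd, card_Qt σ hσ,
          nsmul_eq_mul, ZMod.natCast_self]
        ring

end Sums

end Stmt9Aux
namespace Stmt9Aux
set_option linter.unusedSectionVars false

variable {p : ℕ}

/-- The integer carry. -/
def cZ [NeZero p] (u v : ZMod p) : ℤ :=
  (((u.val : ℤ) + (v.val : ℤ)) - ((u + v).val : ℤ)) / p

theorem val_cast_self (a : ZMod p) [NeZero p] : ((a.val : ℤ) : ZMod p) = a := by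
  push_cast
  simp [ZMod.natCast_val, ZMod.cast_id]

theorem p_mul_cZ [NeZero p] (u v : ZMod p) :
    (p : ℤ) * cZ u v = ((u.val : ℤ) + (v.val : ℤ)) - ((u + v).val : ℤ) := by
  have hdvd : (p : ℤ) ∣ (((u.val : ℤ) + (v.val : ℤ)) - ((u + v).val : ℤ)) := by
    rw [← ZMod.intCast_zmod_eq_zero_iff_dvd]
    push_cast
    simp [ZMod.natCast_val, ZMod.cast_id]
  exact Int.mul_ediv_cancel' hdvd

section Sigma

variable [NeZero p] (σ : Qt p → Heis p) (hσ : IsSection (Heis.Hsub p) σ)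
include hσ

/-- The integer measuring the failure of the lift of `e₁^∨` to be compatible with `w`. -/
noncomputable def MInt (x : Qt p) (g : Heis p) : ℤ :=
  ((w σ x g).2.1.val : ℤ) + ((σ (act σ x g)).2.1.val : ℤ)
    - (g.2.1.val : ℤ) - ((σ x).2.1.val : ℤ)

theorem p_dvd_MInt (x : Qt p) (g : Heis p) : (p : ℤ) ∣ MInt σ x g := by
  rw [← ZMod.intCast_zmod_eq_zero_iff_dvd, MInt]
  push_cast
  simp only [ZMod.natCast_val, ZMod.cast_id]
  rw [w_snd σ hσ x g]
  ring

/-- The mod-`p` reduction of `MInt / p`. -/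
noncomputable def mm (x : Qt p) (g : Heis p) : ZMod p :=
  ((MInt σ x g / p : ℤ) : ZMod p)

/-- The key identity (projection-formula homotopy in degree (2,1)). -/
theorem star (x : Qt p) (g0 g1 : Heis p) :
    ((cZ (w σ x g0).2.1 (w σ (act σ x g0) g1).2.1 : ℤ) : ZMod p)
      = ((cZ g0.2.1 g1.2.1 : ℤ) : ZMod p)
        + mm σ x g0 + mm σ (act σ x g0) g1 - mm σ x (g0 * g1) := by
  have hpne : (p : ℤ) ≠ 0 := by exact_mod_cast (NeZero.ne p)
  obtain ⟨k1, hk1⟩ := p_dvd_MInt σ hσ x g0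
  obtain ⟨k2, hk2⟩ := p_dvd_MInt σ hσ (act σ x g0) g1
  obtain ⟨k3, hk3⟩ := p_dvd_MInt σ hσ x (g0 * g1)
  have hm1 : mm σ x g0 = (k1 : ZMod p) := by rw [mm, hk1, Int.mul_ediv_cancel_left _ hpne]
  have hm2 : mm σ (act σ x g0) g1 = (k2 : ZMod p) := by
    rw [mm, hk2, Int.mul_ediv_cancel_left _ hpne]
  have hm3 : mm σ x (g0 * g1) = (k3 : ZMod p) := by
    rw [mm, hk3, Int.mul_ediv_cancel_left _ hpne]
  -- the integer identity
  have hint : cZ (w σ x g0).2.1 (w σ (act σ x g0) g1).2.1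
      = cZ g0.2.1 g1.2.1 + k1 + k2 - k3 := by
    have e1 := p_mul_cZ (w σ x g0).2.1 (w σ (act σ x g0) g1).2.1
    have e2 := p_mul_cZ g0.2.1 g1.2.1
    have hXY : (w σ x g0).2.1 + (w σ (act σ x g0) g1).2.1 = (w σ x (g0 * g1)).2.1 :=
      (w_snd_add σ hσ x g0 g1).symm
    have hbb : g0.2.1 + g1.2.1 = (g0 * g1).2.1 := by rw [hmul_def]
    rw [hXY] at e1
    rw [hbb] at e2
    have hM1 : MInt σ x g0 = (p : ℤ) * k1 := hk1
    have hM2 : MInt σ (act σ x g0) g1 = (p : ℤ) * k2 := hk2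
    have hM3 : MInt σ x (g0 * g1) = (p : ℤ) * k3 := hk3
    rw [MInt] at hM1 hM2 hM3
    have hact : act σ x (g0 * g1) = act σ (act σ x g0) g1 := act_mul σ hσ x g0 g1
    rw [hact] at hM3
    apply mul_left_cancel₀ hpne
    push_cast
    linarith [e1, e2, hM1, hM2, hM3]
  rw [hint, hm1, hm2, hm3]
  push_cast
  ring

/-- The 2-cochain `N` (with parameter `rr`). -/
noncomputable def NN (rr : Qt p → Heis p → ZMod p) (g g' : Heis p) : ZMod p :=
  ∑ x : Qt p, mm σ x g * rr (act σ x g) g'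

/-- The main identity: the transfer of the cup product is the coboundary of `N`. -/
theorem main_identity (rr : Qt p → Heis p → ZMod p)
    (hrr_add : ∀ x g h, rr x (g * h) = rr x g + rr (act σ x g) h)
    (hrr_sum : ∀ g, ∑ x : Qt p, rr x g = 0) (g0 g1 g2 : Heis p) :
    ∑ x : Qt p, ((cZ (w σ x g0).2.1 (w σ (act σ x g0) g1).2.1 : ℤ) : ZMod p)
        * rr (act σ (act σ x g0) g1) g2
      = NN σ rr g1 g2 - NN σ rr (g0 * g1) g2 + NN σ rr g0 (g1 * g2) - NN σ rr g0 g1 := by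
  have step1 : ∀ x : Qt p,
      ((cZ (w σ x g0).2.1 (w σ (act σ x g0) g1).2.1 : ℤ) : ZMod p)
          * rr (act σ (act σ x g0) g1) g2
        = ((cZ g0.2.1 g1.2.1 : ℤ) : ZMod p) * rr (act σ (act σ x g0) g1) g2
          + mm σ x g0 * (rr (act σ x g0) (g1 * g2) - rr (act σ x g0) g1)
          + mm σ (act σ x g0) g1 * rr (act σ (act σ x g0) g1) g2
          - mm σ x (g0 * g1) * rr (act σ x (g0 * g1)) g2 := by
    intro x
    rw [star σ hσ x g0 g1]
    have h2 : rr (act σ (act σ x g0) g1) g2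
        = rr (act σ x g0) (g1 * g2) - rr (act σ x g0) g1 := by
      rw [hrr_add (act σ x g0) g1 g2]; ring
    rw [act_mul σ hσ x g0 g1]
    rw [← h2]
    ring
  rw [Finset.sum_congr rfl (fun x _ => step1 x)]
  have hsplit : ∀ a b c d : Qt p → ZMod p,
      ∑ x : Qt p, (a x + b x + c x - d x)
        = (∑ x, a x) + (∑ x, b x) + (∑ x, c x) - (∑ x, d x) := by
    intro a b c d
    rw [Finset.sum_sub_distrib, Finset.sum_add_distrib, Finset.sum_add_distrib]
  rw [hsplit]
  have hS1 : ∑ x : Qt p, ((cZ g0.2.1 g1.2.1 : ℤ) : ZMod p)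
      * rr (act σ (act σ x g0) g1) g2 = 0 := by
    rw [← Finset.mul_sum]
    have : ∑ x : Qt p, rr (act σ (act σ x g0) g1) g2 = ∑ x : Qt p, rr x g2 := by
      have e1 : ∀ x : Qt p, rr (act σ (act σ x g0) g1) g2 = rr (act σ x (g0 * g1)) g2 := by
        intro x; rw [act_mul σ hσ]
      rw [Finset.sum_congr rfl (fun x _ => e1 x)]
      exact sum_sigma_reindex σ hσ (g0 * g1) (fun x => rr x g2)
    rw [this, hrr_sum g2, mul_zero]
  have hS2 : ∑ x : Qt p, mm σ x g0 * (rr (act σ x g0) (g1 * g2) - rr (act σ x g0) g1)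
      = NN σ rr g0 (g1 * g2) - NN σ rr g0 g1 := by
    rw [NN, NN, ← Finset.sum_sub_distrib]
    exact Finset.sum_congr rfl (fun x _ => by ring)
  have hS3 : ∑ x : Qt p, mm σ (act σ x g0) g1 * rr (act σ (act σ x g0) g1) g2
      = NN σ rr g1 g2 :=
    sum_sigma_reindex σ hσ g0 (fun y => mm σ y g1 * rr (act σ y g1) g2)
  have hS4 : ∑ x : Qt p, mm σ x (g0 * g1) * rr (act σ x (g0 * g1)) g2
      = NN σ rr (g0 * g1) g2 := rfl
  rw [hS1, hS2, hS3, hS4]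
  ring

end Sigma

end Stmt9Aux
namespace Stmt9Aux
set_option linter.unusedSectionVars false

variable {p : ℕ}

/-- The map `k ↦ k/p mod ℤ` from `ℤ` to `ℚ/ℤ`. -/
noncomputable def phiZ (p : ℕ) (k : ℤ) : QZ := (((k : ℚ) / p : ℚ) : QZ)

theorem phiZ_add (a b : ℤ) : phiZ p (a + b) = phiZ p a + phiZ p b := by
  rw [phiZ, phiZ, phiZ]
  push_cast
  rw [add_div, AddCircle.coe_add]

theorem phiZ_p_mul [NeZero p] (a : ℤ) : phiZ p ((p : ℤ) * a) = 0 := by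
  rw [phiZ]
  have hpne : (p : ℚ) ≠ 0 := by exact_mod_cast (NeZero.ne p)
  have : (((p : ℤ) * a : ℤ) : ℚ) / p = (a : ℚ) := by
    push_cast; field_simp
  rw [this, AddCircle.coe_eq_zero_iff]
  exact ⟨a, by simp⟩

theorem phiZ_congr [NeZero p] {a b : ℤ} (h : (a : ZMod p) = (b : ZMod p)) :
    phiZ p a = phiZ p b := by
  have : (p : ℤ) ∣ a - b := by
    rw [← ZMod.intCast_zmod_eq_zero_iff_dvd]
    push_cast
    rw [h]; ring
  obtain ⟨k, hk⟩ := this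
  have : a = b + (p : ℤ) * k := by linarith [hk]
  rw [this, phiZ_add, phiZ_p_mul, add_zero]

/-- The homomorphism `ZMod p → ℚ/ℤ`, `z ↦ z.val / p`. -/
noncomputable def phi [NeZero p] (z : ZMod p) : QZ := phiZ p (z.val : ℤ)

theorem phi_intCast [NeZero p] (k : ℤ) : phi ((k : ZMod p)) = phiZ p k :=
  phiZ_congr (by rw [val_cast_self])

theorem phi_add [NeZero p] (u v : ZMod p) : phi (u + v) = phi u + phi v := by
  rw [phi, phi, phi, ← phiZ_add]
  apply phiZ_congr
  push_cast
  simp [val_cast_self]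

/-- `phi` as an additive monoid homomorphism. -/
noncomputable def phiHom [NeZero p] : ZMod p →+ QZ where
  toFun := phi
  map_zero' := by
    rw [phi]
    simp only [ZMod.val_zero, Int.cast_zero]
    rw [phiZ]
    norm_num
  map_add' := phi_add

theorem phi_sum [NeZero p] {ι : Type*} [Fintype ι] (f : ι → ZMod p) :
    phi (∑ i, f i) = ∑ i, phi (f i) := by
  exact map_sum (phiHom (p := p)) f Finset.univ

theorem phi_sub [NeZero p] (u v : ZMod p) : phi (u - v) = phi u - phi v :=
  map_sub (phiHom (p := p)) u v

end Stmt9Aux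
namespace Stmt9Aux
set_option linter.unusedSectionVars false

variable {p : ℕ}

theorem l1_apply (y : Heis.Hsub p) : l1 y = (((y : Heis p).2.1.val : ℚ)) / p := rfl

theorem bracket_eq [NeZero p] (X Y : ZMod p) :
    ((X.val : ℚ) / p + (Y.val : ℚ) / p - (((X + Y).val : ℚ)) / p) = (cZ X Y : ℚ) := by
  have h := p_mul_cZ X Y
  have hpne : (p : ℚ) ≠ 0 := by exact_mod_cast (NeZero.ne p)
  have h' : ((p : ℚ)) * (cZ X Y : ℚ) = (X.val : ℚ) + (Y.val : ℚ) - ((X + Y).val : ℚ) := by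
    exact_mod_cast h
  rw [← add_div, div_sub_div_same, div_eq_iff hpne]
  linarith [h']

theorem value_eq [NeZero p] (X Y R : ZMod p) :
    (((cZ X Y : ℚ) * ((R.val : ℚ) / p) : ℚ) : QZ) = phi (((cZ X Y : ℤ) : ZMod p) * R) := by
  have h1 : ((cZ X Y : ℚ) * ((R.val : ℚ) / p)) = (((cZ X Y * (R.val : ℤ) : ℤ) : ℚ)) / (p : ℚ) := by
    push_cast; ring
  rw [h1]
  have h2 : ((((cZ X Y * (R.val : ℤ) : ℤ) : ℚ) / (p : ℚ) : ℚ) : QZ)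
      = phiZ p (cZ X Y * (R.val : ℤ)) := rfl
  rw [h2, ← phi_intCast]
  congr 1
  push_cast
  simp [ZMod.natCast_val, ZMod.cast_id]

section Sigma

variable [NeZero p] (σ : Qt p → Heis p) (hσ : IsSection (Heis.Hsub p) σ)
include hσ

theorem entries_eq (g : Fin 3 → Heis p) (x : Qt p) :
    (fun i : Fin 3 =>
      σ (Quotient.mk (QuotientGroup.rightRel (Heis.Hsub p))
          (σ x * ((List.ofFn g).take i).prod))
        * g i *
      (σ (Quotient.mk (QuotientGroup.rightRel (Heis.Hsub p))
          (σ x * ((List.ofFn g).take ((i : ℕ) + 1)).prod)))⁻¹)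
    = ![w σ x (g 0), w σ (act σ x (g 0)) (g 1),
        w σ (act σ (act σ x (g 0)) (g 1)) (g 2)] := by
  funext i
  fin_cases i
  · simp only [List.ofFn_succ, List.ofFn_zero, Fin.val_zero, List.take_zero, List.prod_nil,
      mul_one, List.take_succ_cons, List.prod_cons, Matrix.cons_val_zero, Fin.isValue,
      Fin.succ_zero_eq_one]
    rw [hσ x]
    rfl
  · simp only [List.ofFn_succ, List.ofFn_zero, Fin.val_one, List.take_succ_cons,
      List.take_zero, List.prod_nil, List.prod_cons, mul_one, Matrix.cons_val_one,
      Matrix.head_cons, Fin.isValue, Fin.succ_zero_eq_one, w]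
    rw [← act_mul σ hσ]
    simp only [act]
    rfl
  · simp only [List.ofFn_succ, List.ofFn_zero, List.take_succ_cons, List.take_zero,
      List.prod_nil, List.prod_cons, mul_one, Fin.isValue, Matrix.cons_val_two,
      Matrix.head_cons, Matrix.tail_cons, w]
    rw [← act_mul σ hσ, ← act_mul σ hσ, mul_assoc (g 0) (g 1) (g 2)]
    simp only [act]
    rfl

theorem transfer_eq (lr : Heis.Hsub p → ℚ) (R : Heis p → ZMod p)
    (hlr : ∀ (y : Heis p) (hy : y ∈ Heis.Hsub p), lr ⟨y, hy⟩ = ((R y).val : ℚ) / p)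
    (g : Fin 3 → Heis p) :
    transfer (Heis.Hsub p) σ (cup3 l1 lr) g =
      phi (∑ x : Qt p,
        ((cZ (w σ x (g 0)).2.1 (w σ (act σ x (g 0)) (g 1)).2.1 : ℤ) : ZMod p)
          * R (w σ (act σ (act σ x (g 0)) (g 1)) (g 2))) := by
  rw [phi_sum]
  simp only [transfer]
  rw [finsum_eq_sum_of_fintype]
  refine Finset.sum_congr rfl fun x _ => ?_
  rw [entries_eq σ hσ g x]
  have hmem : ∀ i : Fin 3, (![w σ x (g 0), w σ (act σ x (g 0)) (g 1),
      w σ (act σ (act σ x (g 0)) (g 1)) (g 2)]) i ∈ Heis.Hsub p := by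
    intro i
    fin_cases i
    · exact w_mem σ hσ _ _
    · exact w_mem σ hσ _ _
    · exact w_mem σ hσ _ _
  simp only [restrictTo]
  rw [dif_pos hmem]
  simp only [cup3, l1_apply, Matrix.cons_val_zero, Matrix.cons_val_one, Matrix.head_cons,
    Matrix.cons_val_two, Matrix.tail_cons, MulMemClass.coe_mul]
  rw [hlr _ _]
  rw [show ((w σ x (g 0) * w σ (act σ x (g 0)) (g 1)).2.1 : ZMod p)
      = (w σ x (g 0)).2.1 + (w σ (act σ x (g 0)) (g 1)).2.1 from by rw [hmul_def]]
  rw [bracket_eq, value_eq]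

end Sigma

end Stmt9Aux
namespace Stmt9Aux
set_option linter.unusedSectionVars false

theorem cochainD_two {G : Type*} [Group G] (h : (Fin 2 → G) → QZ) (g : Fin 3 → G) :
    cochainD h g = h ![g 1, g 2] - h ![g 0 * g 1, g 2] + h ![g 0, g 1 * g 2]
      - h ![g 0, g 1] := by
  rw [cochainD, Fin.sum_univ_two]
  norm_num
  have e1 : (fun i : Fin 2 => g i.succ) = ![g 1, g 2] := by
    funext i; fin_cases i <;> rfl
  have e2 : (fun j : Fin 2 => if j = 0 then g j.castSucc * g j.succ else g j.succ)
      = ![g 0 * g 1, g 2] := by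
    funext j; fin_cases j <;> rfl
  have e3 : (fun j : Fin 2 => if j = 0 then g j.castSucc
        else if (j : ℕ) = 1 then g j.castSucc * g j.succ else g j.succ)
      = ![g 0, g 1 * g 2] := by
    funext j; fin_cases j <;> rfl
  have e4 : (fun i : Fin 2 => g i.castSucc) = ![g 0, g 1] := by
    funext i; fin_cases i <;> rfl
  rw [e1, e2, e3, e4]
  abel

end Stmt9Aux

namespace Stmt9Aux
set_option linter.unusedSectionVars false

variable {p : ℕ}

theorem phi_comb [NeZero p] (a b c d : ZMod p) :
    phi (a - b + c - d) = phi a - phi b + phi c - phi d := by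
  rw [phi_sub, phi_add, phi_sub]

theorem transfer_coboundary [NeZero p] (σ : Qt p → Heis p)
    (hσ : IsSection (Heis.Hsub p) σ)
    (lr : Heis.Hsub p → ℚ) (R : Heis p → ZMod p)
    (hlr : ∀ (y : Heis p) (hy : y ∈ Heis.Hsub p), lr ⟨y, hy⟩ = ((R y).val : ℚ) / p)
    (hRadd : ∀ (x : Qt p) (g h : Heis p),
      R (w σ x (g * h)) = R (w σ x g) + R (w σ (act σ x g) h))
    (hRsum : ∀ g : Heis p, ∑ x : Qt p, R (w σ x g) = 0) :
    IsCoboundary (transfer (Heis.Hsub p) σ (cup3 l1 lr)) := by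
  refine ⟨fun g => phi (NN σ (fun x g => R (w σ x g)) (g 0) (g 1)), ?_⟩
  funext g
  rw [cochainD_two]
  simp only [Matrix.cons_val_zero, Matrix.cons_val_one, Matrix.head_cons]
  rw [transfer_eq σ hσ lr R hlr g]
  have hmain := main_identity σ hσ (fun x g => R (w σ x g)) hRadd hRsum (g 0) (g 1) (g 2)
  rw [hmain, phi_comb]

end Stmt9Aux
/-- Let `p` be an odd prime and `T` the Heisenberg group of order `p³`, generated by
`A, B` with `A^p = B^p = [A,B]^p = [A,[A,B]] = [B,[A,B]] = 1`; let
`H = ⟨B, [A,B]⟩ ≅ (ℤ/p)²` with dual basis `e₁^∨, e₂^∨` (`e₁ = B`, `e₂ = [A,B]`).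
Then `Cores_H^T(e₁^∨ ∪ e₁^∨) = 0` and `Cores_H^T(e₁^∨ ∪ e₂^∨) = 0` in `H³(T, ℚ/ℤ)`:
the transfers of the corresponding 3-cocycles are coboundaries. -/
theorem stmt9 (p : ℕ) (hp : p.Prime) (hodd : Odd p)
    (σ : Quotient (QuotientGroup.rightRel (Heis.Hsub p)) → Heis p)
    (hσ : IsSection (Heis.Hsub p) σ) :
    (Heis.A p ^ p = 1 ∧ Heis.B p ^ p = 1 ∧
      ⁅Heis.A p, Heis.B p⁆ ^ p = 1 ∧
      ⁅Heis.A p, ⁅Heis.A p, Heis.B p⁆⁆ = 1 ∧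
      ⁅Heis.B p, ⁅Heis.A p, Heis.B p⁆⁆ = 1) ∧
    Heis.Hsub p = Subgroup.closure {Heis.B p, ⁅Heis.A p, Heis.B p⁆} ∧
    IsCoboundary (transfer (Heis.Hsub p) σ (cup3 l1 l1)) ∧
    IsCoboundary (transfer (Heis.Hsub p) σ (cup3 l1 l2)) := by
  haveI : NeZero p := ⟨hp.ne_zero⟩
  refine ⟨Stmt9Aux.relations, Stmt9Aux.closure_eq, ?_, ?_⟩
  · exact Stmt9Aux.transfer_coboundary σ hσ l1 (fun y => y.2.1)
      (fun y hy => rfl)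
      (fun x g h => Stmt9Aux.w_snd_add σ hσ x g h)
      (fun g => Stmt9Aux.sum_w_snd σ hσ g)
  · exact Stmt9Aux.transfer_coboundary σ hσ l2 (fun y => y.2.2)
      (fun y hy => rfl)
      (fun x g h => Stmt9Aux.w_thd_add σ hσ x g h)
      (fun g => Stmt9Aux.sum_w_thd σ hσ hp hodd g)
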